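/- arXiv:1607.00565 — 2 statements merged into one kernel-verified Lean document; each statement's English description precedes it below -/
import Mathlib

section
/- Let p ≥ 0 be a real number and let w : Br_n → ℝ be a nonnegative summable function such that for every x ∈ Br_n, Σ_{y ∈ Br_n with x ≤_l y} w(y) = p^{ℓ(x)}. Then for every x ∈ Br_n, w(x) = p^{ℓ(x)} · Σ_{X ⊆ Σ} (−1)^{|X|} p^{ℓ(Δ̂(X))}. (In other words, any uniform weight of parameter p on Br_n is given on singletons by the inclusion–exclusion formula w(x) = H_n(p)·p^{ℓ(x)}.) -/
open scoped Classical

namespace BraidMeasure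

/-- Defining relations of the positive braid monoid on `n` strands,
with Artin generators indexed by `Fin (n - 1)`. -/
inductive BraidRel (n : ℕ) :
    FreeMonoid (Fin (n - 1)) → FreeMonoid (Fin (n - 1)) → Prop
  | comm (i j : Fin (n - 1)) (h : (i : ℕ) + 2 ≤ (j : ℕ)) :
      BraidRel n (FreeMonoid.of i * FreeMonoid.of j)
        (FreeMonoid.of j * FreeMonoid.of i)
  | braid (i j : Fin (n - 1)) (h : (i : ℕ) + 1 = (j : ℕ)) :
      BraidRel n (FreeMonoid.of i * FreeMonoid.of j * FreeMonoid.of i)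
        (FreeMonoid.of j * FreeMonoid.of i * FreeMonoid.of j)

/-- The positive braid monoid `Br_n`, presented by the Artin relations. -/
def BraidMonoid (n : ℕ) : Type := (conGen (BraidRel n)).Quotient

instance (n : ℕ) : Monoid (BraidMonoid n) :=
  inferInstanceAs (Monoid (conGen (BraidRel n)).Quotient)

/-- The Artin generator `σ_{i+1}` of `Br_n`. -/
def gen {n : ℕ} (i : Fin (n - 1)) : BraidMonoid n :=
  (conGen (BraidRel n)).mk' (FreeMonoid.of i)

/-- Left divisibility: `x ≤_l y` iff `∃ z, y = x * z`. -/
def ldvd {n : ℕ} (x y : BraidMonoid n) : Prop := ∃ z, y = x * z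

/-- Right divisibility: `x ≤_r y` iff `∃ z, y = z * x`. -/
def rdvd {n : ℕ} (x y : BraidMonoid n) : Prop := ∃ z, y = z * x

/-- `σ_{i+1}` for a natural number index, with junk value `1` out of range. -/
def gen' {n : ℕ} (i : ℕ) : BraidMonoid n :=
  if h : i < n - 1 then gen ⟨i, h⟩ else 1

/-- The Garside element `Δ_n = (σ_1 ⋯ σ_{n-1})(σ_1 ⋯ σ_{n-2}) ⋯ (σ_1 σ_2) σ_1`. -/
def garside (n : ℕ) : BraidMonoid n :=
  ((List.range (n - 1)).map fun j =>
    ((List.range (n - 1 - j)).map fun i => (gen' i : BraidMonoid n)).prod).prod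

/-- The set of simple braids: left divisors of `Δ_n`. -/
def Simples (n : ℕ) : Set (BraidMonoid n) := {x | ldvd x (garside n)}

/-- `L(y) = {σ_i : σ_i ≤_l y}` (as a set of indices). -/
def Lset {n : ℕ} (y : BraidMonoid n) : Set (Fin (n - 1)) := {i | ldvd (gen i) y}

/-- `R(x) = {σ_i : x · σ_i ∉ S}` (as a set of indices). -/
def Rset {n : ℕ} (x : BraidMonoid n) : Set (Fin (n - 1)) :=
  {i | x * gen i ∉ Simples n}

/-- The relation `x → y` between simple braids: `L(y) ⊆ R(x)`. -/
def Arrow {n : ℕ} (x y : BraidMonoid n) : Prop := Lset y ⊆ Rset x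

/-- The Möbius polynomial of the positive braid monoid:
`H_0 = H_1 = 1`, `H_n = ∑_{k=1}^{n} (-1)^{k+1} t^{k(k-1)/2} H_{n-k}`. -/
noncomputable def mobiusH : ℕ → Polynomial ℤ
  | 0 => 1
  | 1 => 1
  | (n + 2) =>
      ∑ j ∈ Finset.range (n + 2),
        (-1 : Polynomial ℤ) ^ j * Polynomial.X ^ ((j + 1) * j / 2) * mobiusH (n + 1 - j)
  termination_by n => n
  decreasing_by omega


/-! ### Auxiliary development: word combinatorics and cancellativity. -/

section Aux

variable {n : ℕ}

def far (a b : Fin (n-1)) : Prop := (a:ℕ)+2 ≤ (b:ℕ) ∨ (b:ℕ)+2 ≤ (a:ℕ)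
def adj (a b : Fin (n-1)) : Prop := (a:ℕ)+1 = (b:ℕ) ∨ (b:ℕ)+1 = (a:ℕ)

lemma far.symm {a b : Fin (n-1)} (h : far a b) : far b a := h.elim Or.inr Or.inl
lemma adj.symm {a b : Fin (n-1)} (h : adj a b) : adj b a := h.elim Or.inr Or.inl

inductive Step (n : ℕ) : List (Fin (n-1)) → List (Fin (n-1)) → Prop
  | comm (l r : List (Fin (n-1))) (i j : Fin (n-1)) (h : (i:ℕ)+2 ≤ (j:ℕ)) :
      Step n (l ++ i :: j :: r) (l ++ j :: i :: r)
  | braid (l r : List (Fin (n-1))) (i j : Fin (n-1)) (h : (i:ℕ)+1 = (j:ℕ)) :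
      Step n (l ++ i :: j :: i :: r) (l ++ j :: i :: j :: r)

def SStep (n : ℕ) (u v : List (Fin (n-1))) : Prop := Step n u v ∨ Step n v u

def Rel (n : ℕ) : List (Fin (n-1)) → List (Fin (n-1)) → Prop :=
  Relation.ReflTransGen (SStep n)

lemma SStep.symm' {u v : List (Fin (n-1))} (h : SStep n u v) : SStep n v u := h.elim Or.inr Or.inl

lemma Rel.refl' {u : List (Fin (n-1))} : Rel n u u := Relation.ReflTransGen.refl

lemma Rel.trans' {u v w : List (Fin (n-1))} (h1 : Rel n u v) (h2 : Rel n v w) : Rel n u w :=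
  Relation.ReflTransGen.trans h1 h2

lemma Rel.symm' {u v : List (Fin (n-1))} (h : Rel n u v) : Rel n v u := by
  induction h with
  | refl => exact Rel.refl'
  | tail _ h2 ih => exact Rel.trans' (Relation.ReflTransGen.single h2.symm') ih

lemma Step.length_eq {u v : List (Fin (n-1))} (h : Step n u v) : u.length = v.length := by
  cases h <;> simp

lemma Rel.length_eq {u v : List (Fin (n-1))} (h : Rel n u v) : u.length = v.length := by
  induction h with
  | refl => rfl
  | tail _ h2 ih =>
    rcases h2 with h2 | h2
    · rw [ih, h2.length_eq]
    · rw [ih, ← h2.length_eq]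

lemma Step.cons {u v : List (Fin (n-1))} (x : Fin (n-1)) (h : Step n u v) :
    Step n (x :: u) (x :: v) := by
  cases h with
  | comm l r i j hij => exact Step.comm (x :: l) r i j hij
  | braid l r i j hij => exact Step.braid (x :: l) r i j hij

lemma Rel.cons {u v : List (Fin (n-1))} (x : Fin (n-1)) (h : Rel n u v) :
    Rel n (x :: u) (x :: v) := by
  induction h with
  | refl => exact Rel.refl'
  | tail _ h2 ih =>
    exact ih.trans' (Relation.ReflTransGen.single (h2.elim (fun h => Or.inl (h.cons x))
      (fun h => Or.inr (h.cons x))))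

lemma Step.append_right {u v : List (Fin (n-1))} (r' : List (Fin (n-1))) (h : Step n u v) :
    Step n (u ++ r') (v ++ r') := by
  cases h with
  | comm l r i j hij =>
    have := Step.comm (n := n) l (r ++ r') i j hij
    simpa using this
  | braid l r i j hij =>
    have := Step.braid (n := n) l (r ++ r') i j hij
    simpa using this

lemma Rel.append_right {u v : List (Fin (n-1))} (r' : List (Fin (n-1))) (h : Rel n u v) :
    Rel n (u ++ r') (v ++ r') := by
  induction h with
  | refl => exact Rel.refl'
  | tail _ h2 ih =>
    exact ih.trans' (Relation.ReflTransGen.single (h2.elim (fun h => Or.inl (h.append_right r'))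
      (fun h => Or.inr (h.append_right r'))))

lemma Rel.append_left {u v : List (Fin (n-1))} (l : List (Fin (n-1))) (h : Rel n u v) :
    Rel n (l ++ u) (l ++ v) := by
  induction l with
  | nil => exact h
  | cons x l ih => exact ih.cons x

lemma Rel.append {u v u' v' : List (Fin (n-1))} (h1 : Rel n u u') (h2 : Rel n v v') :
    Rel n (u ++ v) (u' ++ v') :=
  (h1.append_right v).trans' (h2.append_left u')

lemma rel_comm {a b : Fin (n-1)} (h : far a b) (t : List (Fin (n-1))) :
    Rel n (a :: b :: t) (b :: a :: t) := by
  rcases h with h | h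
  · exact Relation.ReflTransGen.single (Or.inl (Step.comm [] t a b h))
  · exact Relation.ReflTransGen.single (Or.inr (Step.comm [] t b a h))

lemma rel_braid {a b : Fin (n-1)} (h : adj a b) (t : List (Fin (n-1))) :
    Rel n (a :: b :: a :: t) (b :: a :: b :: t) := by
  rcases h with h | h
  · exact Relation.ReflTransGen.single (Or.inl (Step.braid [] t a b h))
  · exact Relation.ReflTransGen.single (Or.inr (Step.braid [] t b a h))

def Out (a b : Fin (n-1)) (u v : List (Fin (n-1))) : Prop :=
  (a = b ∧ Rel n u v) ∨
  (far a b ∧ ∃ w, Rel n u (b :: w) ∧ Rel n v (a :: w)) ∨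
  (adj a b ∧ ∃ w, Rel n u (b :: a :: w) ∧ Rel n v (a :: b :: w))

lemma Out.congr_left {a b : Fin (n-1)} {u u' v : List (Fin (n-1))}
    (h : Rel n u u') (ho : Out a b u' v) : Out a b u v := by
  rcases ho with ⟨he, hr⟩ | ⟨hf, w, h1, h2⟩ | ⟨ha, w, h1, h2⟩
  · exact Or.inl ⟨he, h.trans' hr⟩
  · exact Or.inr (Or.inl ⟨hf, w, h.trans' h1, h2⟩)
  · exact Or.inr (Or.inr ⟨ha, w, h.trans' h1, h2⟩)

lemma step_inv {u v : List (Fin (n-1))} (h : Step n u v) :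
    (∃ (l r : List (Fin (n-1))) (i j : Fin (n-1)), (i:ℕ)+2 ≤ (j:ℕ) ∧ u = l ++ i :: j :: r ∧ v = l ++ j :: i :: r) ∨
    (∃ (l r : List (Fin (n-1))) (i j : Fin (n-1)), (i:ℕ)+1 = (j:ℕ) ∧ u = l ++ i :: j :: i :: r ∧ v = l ++ j :: i :: j :: r) := by
  cases h with
  | comm l r i j hij => exact Or.inl ⟨l, r, i, j, hij, rfl, rfl⟩
  | braid l r i j hij => exact Or.inr ⟨l, r, i, j, hij, rfl, rfl⟩

lemma sstep_cons {x : Fin (n-1)} {u m : List (Fin (n-1))} (h : SStep n (x :: u) m) :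
    (∃ u', m = x :: u' ∧ SStep n u u') ∨
    (∃ c t, far x c ∧ u = c :: t ∧ m = c :: x :: t) ∨
    (∃ c t, adj x c ∧ u = c :: x :: t ∧ m = c :: x :: c :: t) := by
  rcases h with h | h
  · rcases step_inv h with ⟨l, r, i, j, hij, h1, h2⟩ | ⟨l, r, i, j, hij, h1, h2⟩
    · cases l with
      | nil =>
        simp only [List.nil_append, List.cons.injEq] at h1 h2
        subst h2
        exact Or.inr (Or.inl ⟨j, r, Or.inl (h1.1 ▸ hij), h1.2, by rw [h1.1]⟩)
      | cons y l' =>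
        simp only [List.cons_append, List.cons.injEq] at h1 h2
        subst h2
        exact Or.inl ⟨l' ++ j :: i :: r, by rw [h1.1], Or.inl (by rw [h1.2]; exact Step.comm l' r i j hij)⟩
    · cases l with
      | nil =>
        simp only [List.nil_append, List.cons.injEq] at h1 h2
        subst h2
        exact Or.inr (Or.inr ⟨j, r, Or.inl (h1.1 ▸ hij), by rw [h1.2, h1.1], by rw [h1.1]⟩)
      | cons y l' =>
        simp only [List.cons_append, List.cons.injEq] at h1 h2
        subst h2
        exact Or.inl ⟨l' ++ j :: i :: j :: r, by rw [h1.1], Or.inl (by rw [h1.2]; exact Step.braid l' r i j hij)⟩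
  · rcases step_inv h with ⟨l, r, i, j, hij, h2, h1⟩ | ⟨l, r, i, j, hij, h2, h1⟩
    · cases l with
      | nil =>
        simp only [List.nil_append, List.cons.injEq] at h1 h2
        subst h2
        exact Or.inr (Or.inl ⟨i, r, Or.inr (h1.1 ▸ hij), h1.2, by rw [h1.1]⟩)
      | cons y l' =>
        simp only [List.cons_append, List.cons.injEq] at h1 h2
        subst h2
        exact Or.inl ⟨l' ++ i :: j :: r, by rw [h1.1], Or.inr (by rw [h1.2]; exact Step.comm l' r i j hij)⟩
    · cases l with
      | nil =>
        simp only [List.nil_append, List.cons.injEq] at h1 h2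
        subst h2
        exact Or.inr (Or.inr ⟨i, r, Or.inr (h1.1 ▸ hij), by rw [h1.2, h1.1], by rw [h1.1]⟩)
      | cons y l' =>
        simp only [List.cons_append, List.cons.injEq] at h1 h2
        subst h2
        exact Or.inl ⟨l' ++ i :: j :: i :: r, by rw [h1.1], Or.inr (by rw [h1.2]; exact Step.braid l' r i j hij)⟩

lemma step_two_le {u v : List (Fin (n-1))} (h : Step n u v) :
    2 ≤ u.length ∧ 2 ≤ v.length := by
  cases h <;> constructor <;> simp <;> omega

lemma rel_singleton {a : Fin (n-1)} {w : List (Fin (n-1))} (h : Rel n [a] w) : w = [a] := by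
  rcases Relation.ReflTransGen.cases_head h with h | ⟨c, hc, _⟩
  · exact h.symm
  · exfalso
    rcases hc with hc | hc
    · have := (step_two_le hc).1; simp at this
    · have := (step_two_le hc).2; simp at this

lemma key_succ (N : ℕ)
    (ihN : ∀ (u v : List (Fin (n-1))) (a b : Fin (n-1)),
      u.length ≤ N → Rel n (a :: u) (b :: v) → Out a b u v) :
    ∀ (s : List (Fin (n-1))) (b : Fin (n-1)) (v : List (Fin (n-1))), Rel n s (b :: v) →
      ∀ (a : Fin (n-1)) (u : List (Fin (n-1))), s = a :: u → u.length ≤ N + 1 → Out a b u v := by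
  intro s b v h
  induction h using Relation.ReflTransGen.head_induction_on with
  | refl =>
    intro a u he _
    rw [List.cons.injEq] at he
    exact Or.inl ⟨he.1.symm, he.2 ▸ Rel.refl'⟩
  | @head s m h' hrest ih =>
    intro a u he hlen
    subst he
    rcases sstep_cons h' with ⟨u', rfl, hs⟩ | ⟨c, t, hfac, rfl, rfl⟩ | ⟨c, t, hfac, rfl, rfl⟩
    · -- interior step
      have hu' : Rel n u u' := Relation.ReflTransGen.single hs
      have := ih a u' rfl (by rw [← hu'.length_eq]; exact hlen)
      exact this.congr_left hu'
    · -- head comm step: u = c :: t, m = c :: a :: t, far a c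
      have hout := ih c (a :: t) rfl (by simpa using hlen)
      have hlt : t.length ≤ N := by simpa using hlen
      rcases hout with ⟨rfl, hr⟩ | ⟨hf, w, h1, h2⟩ | ⟨ha, w, h1, h2⟩
      · -- B1.1 : c = b
        exact Or.inr (Or.inl ⟨hfac, t, Rel.refl', hr.symm'⟩)
      · -- B1.2 : far c b, Rel (a::t) (b::w), Rel v (c::w)
        rcases ihN t w a b hlt h1 with ⟨rfl, hr⟩ | ⟨hf2, s1, g1, g2⟩ | ⟨ha2, s1, g1, g2⟩
        · -- B1.2.1 a = b
          exact Or.inl ⟨rfl, (hr.cons c).trans' h2.symm'⟩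
        · -- B1.2.2 far a b
          refine Or.inr (Or.inl ⟨hf2, c :: s1, ?_, ?_⟩)
          · exact (g1.cons c).trans' (rel_comm hf s1)
          · exact h2.trans' ((g2.cons c).trans' (rel_comm hfac.symm s1))
        · -- B1.2.3 adj a b
          refine Or.inr (Or.inr ⟨ha2, c :: s1, ?_, ?_⟩)
          · exact (g1.cons c).trans' ((rel_comm hf (a :: s1)).trans' ((rel_comm hfac.symm s1).cons b))
          · exact h2.trans' ((g2.cons c).trans' ((rel_comm hfac.symm (b :: s1)).trans' ((rel_comm hf s1).cons a)))
      · -- B1.3 : adj c b, Rel (a::t) (b::c::w), Rel v (c::b::w)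
        rcases ihN t (c :: w) a b hlt h1 with ⟨rfl, hr⟩ | ⟨hf2, s1, g1, g2⟩ | ⟨ha2, s1, g1, g2⟩
        · -- B1.3.1 a = b : contradiction with far a c and adj c a
          exact absurd hfac (by rcases ha with h | h <;> intro hh <;> rcases hh with hh | hh <;> omega)
        · -- B1.3.2 far a b ; g2 : Rel (c::w) (a::s1)
          have hws : w.length ≤ N := by
            have := h1.length_eq; simp at this; omega
          rcases ihN w s1 c a hws g2 with ⟨rfl, _⟩ | ⟨_, s2, g3, g4⟩ | ⟨ha3, _⟩
          · exact absurd hfac (by intro hh; rcases hh with hh | hh <;> omega)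
          · -- far c a case : g3 : Rel w (a::s2), g4 : Rel s1 (c::s2)
            refine Or.inr (Or.inl ⟨hf2, c :: b :: s2, ?_, ?_⟩)
            · -- u = c::t ≡ c::b::s1 ≡ c::b::c::s2 ≡ b::c::b::s2
              exact (g1.cons c).trans' (((g4.cons b).cons c).trans' (rel_braid ha s2))
            · -- v ≡ c::b::w ≡ c::b::a::s2 ≡ c::a::b::s2 ≡ a::c::b::s2
              exact h2.trans' (((g3.cons b).cons c).trans'
                (((rel_comm hf2.symm s2).cons c).trans' (rel_comm hfac.symm (b :: s2))))
          · exact absurd hfac (by rcases ha3 with h | h <;> intro hh <;> rcases hh with hh | hh <;> omega)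
        · -- B1.3.3 adj a b ; g2 : Rel (c::w) (a::b::s1)
          have hws : w.length ≤ N := by
            have := h1.length_eq; simp at this; omega
          rcases ihN w (b :: s1) c a hws g2 with ⟨rfl, _⟩ | ⟨_, s2, g3, g4⟩ | ⟨ha3, _⟩
          · exact absurd hfac (by intro hh; rcases hh with hh | hh <;> omega)
          · -- far c a : g3 : Rel w (a::s2), g4 : Rel (b::s1) (c::s2)
            have hs1 : s1.length ≤ N := by
              have e1 := h1.length_eq; have e2 := g2.length_eq; simp at e1 e2; omega
            rcases ihN s1 s2 b c hs1 g4 with ⟨rfl, _⟩ | ⟨hf3, _⟩ | ⟨_, s3, g5, g6⟩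
            · exact absurd ha (by intro hh; rcases hh with hh | hh <;> omega)
            · exact absurd ha (by rcases hf3 with h | h <;> intro hh <;> rcases hh with hh | hh <;> omega)
            · -- adj b c : g5 : Rel s1 (c::b::s3), g6 : Rel s2 (b::c::s3)
              refine Or.inr (Or.inr ⟨ha2, c :: b :: a :: s3, ?_, ?_⟩)
              · -- u = c::t ≡ c b a s1 ≡ c b a c b s3 ≡ c b c a b s3 ≡ b c b a b s3 ≡ b c a b a s3 ≡ b a c b a s3
                refine (g1.cons c).trans' ?_
                refine ((((g5.cons a).cons b).cons c).trans') ?_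
                refine ((((rel_comm hfac (b::s3)).cons b).cons c).trans') ?_
                refine (rel_braid ha (a :: b :: s3)).trans' ?_
                refine ((((rel_braid ha2.symm s3).cons c).cons b).trans') ?_
                exact ((rel_comm hfac.symm (b::a::s3)).cons b)
              · -- v ≡ c b w ≡ c b a s2 ≡ c b a b c s3 ≡ c a b a c s3 ≡ a c b a c s3 ≡ a c b c a s3 ≡ a b c b a s3
                refine h2.trans' ?_
                refine (((g3.cons b).cons c).trans') ?_
                refine ((((g6.cons a).cons b).cons c).trans') ?_
                refine (((rel_braid ha2.symm (c::s3)).cons c).trans') ?_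
                refine ((rel_comm hfac.symm (b::a::c::s3)).trans') ?_
                refine (((((rel_comm hfac s3).cons b).cons c).cons a).trans') ?_
                exact ((rel_braid ha (a::s3)).cons a)
          · exact absurd hfac (by rcases ha3 with h | h <;> intro hh <;> rcases hh with hh | hh <;> omega)
    · -- head braid step: u = c :: a :: t, m = c :: a :: c :: t, adj a c
      have hout := ih c (a :: c :: t) rfl (by simpa using hlen)
      have hct : (c :: t).length ≤ N := by simpa using hlen
      have hlt : t.length ≤ N := by simp at hct ⊢; omega
      rcases hout with ⟨rfl, hr⟩ | ⟨hf, w, h1, h2⟩ | ⟨ha, w, h1, h2⟩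
      · -- B2.1 : c = b
        exact Or.inr (Or.inr ⟨hfac, t, Rel.refl', hr.symm'⟩)
      · -- B2.2 : far c b, h1 : Rel (a::c::t) (b::w), h2 : Rel v (c::w)
        rcases ihN (c :: t) w a b hct h1 with ⟨rfl, hr⟩ | ⟨hf2, s1, g1, g2⟩ | ⟨ha2, s1, g1, g2⟩
        · exact absurd hfac (by rcases hf with h | h <;> intro hh <;> rcases hh with hh | hh <;> omega)
        · -- B2.2.2 far a b : g1 : Rel (c::t) (b::s1), g2 : Rel w (a::s1)
          rcases ihN t s1 c b hlt g1 with ⟨rfl, _⟩ | ⟨_, s2, g3, g4⟩ | ⟨ha3, _⟩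
          · exact absurd hf (by intro hh; rcases hh with hh | hh <;> omega)
          · -- far c b : g3 : Rel t (b::s2), g4 : Rel s1 (c::s2)
            refine Or.inr (Or.inl ⟨hf2, c :: a :: s2, ?_, ?_⟩)
            · -- u = c a t ≡ c a b s2 ≡ c b a s2 ≡ b c a s2
              refine (((g3.cons a).cons c).trans') ?_
              refine (((rel_comm hf2 s2).cons c).trans') ?_
              exact rel_comm hf (a :: s2)
            · -- v ≡ c w ≡ c a s1 ≡ c a c s2 ≡ a c a s2
              refine h2.trans' ?_
              refine ((g2.cons c).trans') ?_
              refine (((g4.cons a).cons c).trans') ?_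
              exact rel_braid hfac.symm s2
          · exact absurd hf (by rcases ha3 with h | h <;> intro hh <;> rcases hh with hh | hh <;> omega)
        · -- B2.2.3 adj a b : g1 : Rel (c::t) (b::a::s1), g2 : Rel w (a::b::s1)
          rcases ihN t (a :: s1) c b hlt g1 with ⟨rfl, _⟩ | ⟨_, s2, g3, g4⟩ | ⟨ha3, _⟩
          · exact absurd hf (by intro hh; rcases hh with hh | hh <;> omega)
          · -- far c b : g3 : Rel t (b::s2), g4 : Rel (a::s1) (c::s2)
            have hs1 : s1.length ≤ N := by
              have := g1.length_eq; simp at this ⊢; omega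
            rcases ihN s1 s2 a c hs1 g4 with ⟨rfl, _⟩ | ⟨hf3, _⟩ | ⟨_, s3, g5, g6⟩
            · exact absurd hfac (by intro hh; rcases hh with hh | hh <;> omega)
            · exact absurd hfac (by rcases hf3 with h | h <;> intro hh <;> rcases hh with hh | hh <;> omega)
            · -- adj a c : g5 : Rel s1 (c::a::s3), g6 : Rel s2 (a::c::s3)
              refine Or.inr (Or.inr ⟨ha2, c :: a :: b :: s3, ?_, ?_⟩)
              · -- u = c a t ≡ c a b s2 ≡ c a b a c s3 ≡ c b a b c s3 ≡ b c a b c s3 ≡ b c a c b s3 ≡ b a c a b s3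
                refine (((g3.cons a).cons c).trans') ?_
                refine ((((g6.cons b).cons a).cons c).trans') ?_
                refine (((rel_braid ha2 (c::s3)).cons c).trans') ?_
                refine ((rel_comm hf (a::b::c::s3)).trans') ?_
                refine ((((rel_comm hf.symm s3).cons a).cons c).cons b).trans' ?_
                exact ((rel_braid hfac.symm (b::s3)).cons b)
              · -- v ≡ c w ≡ c a b s1 ≡ c a b c a s3 ≡ c a c b a s3 ≡ a c a b a s3 ≡ a c b a b s3 ≡ a b c a b s3
                refine h2.trans' ?_
                refine ((g2.cons c).trans') ?_
                refine ((((g5.cons b).cons a).cons c).trans') ?_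
                refine ((((rel_comm hf.symm (a::s3)).cons a).cons c).trans') ?_
                refine ((rel_braid hfac.symm (b::a::s3)).trans') ?_
                refine (((rel_braid ha2 s3).cons c).cons a).trans' ?_
                exact ((rel_comm hf (a::b::s3)).cons a)
          · exact absurd hf (by rcases ha3 with h | h <;> intro hh <;> rcases hh with hh | hh <;> omega)
      · -- B2.3 : adj c b, h1 : Rel (a::c::t) (b::c::w), h2 : Rel v (c::b::w)
        rcases ihN (c :: t) (c :: w) a b hct h1 with ⟨rfl, hr⟩ | ⟨hf2, s1, g1, g2⟩ | ⟨ha2, s1, g1, g2⟩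
        · -- B2.3.1 a = b : Rel (c::t) (c::w) ⇒ Rel t w
          have hr2 := ihN t w c c hlt hr
          have htw : Rel n t w := by
            rcases hr2 with ⟨_, h⟩ | ⟨hf3, _⟩ | ⟨ha3, _⟩
            · exact h
            · exact absurd hf3 (by intro hh; rcases hh with hh | hh <;> omega)
            · exact absurd ha3 (by intro hh; rcases hh with hh | hh <;> omega)
          exact Or.inl ⟨rfl, ((htw.cons a).cons c).trans' h2.symm'⟩
        · -- B2.3.2 far a b : g1 : Rel (c::t) (b::s1), g2 : Rel (c::w) (a::s1)
          rcases ihN t s1 c b hlt g1 with ⟨rfl, _⟩ | ⟨hf3, _⟩ | ⟨_, q, g3, g4⟩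
          · exact absurd ha (by intro hh; rcases hh with hh | hh <;> omega)
          · exact absurd ha (by rcases hf3 with h | h <;> intro hh <;> rcases hh with hh | hh <;> omega)
          · -- adj c b : g3 : Rel t (b::c::q), g4 : Rel s1 (c::b::q)
            have hwlen : w.length ≤ N := by
              have := h1.length_eq; simp at this ⊢; omega
            rcases ihN w s1 c a hwlen g2 with ⟨rfl, _⟩ | ⟨hf3, _⟩ | ⟨_, q', g5, g6⟩
            · exact absurd hfac (by intro hh; rcases hh with hh | hh <;> omega)
            · exact absurd hfac (by rcases hf3 with h | h <;> intro hh <;> rcases hh with hh | hh <;> omega)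
            · -- adj c a : g5 : Rel w (a::c::q'), g6 : Rel s1 (c::a::q')
              -- Rel (c::b::q) (c::a::q') via s1
              have hqlen : (b :: q).length ≤ N := by
                have e1 := g1.length_eq; have e2 := g3.length_eq; simp at e1 e2 ⊢; omega
              have hcc := ihN (b :: q) (a :: q') c c (by simpa using hqlen) (g4.symm'.trans' g6)
              have hba : Rel n (b :: q) (a :: q') := by
                rcases hcc with ⟨_, h⟩ | ⟨hf3, _⟩ | ⟨ha3, _⟩
                · exact h
                · exact absurd hf3 (by intro hh; rcases hh with hh | hh <;> omega)
                · exact absurd ha3 (by intro hh; rcases hh with hh | hh <;> omega)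
              have hqq : (q).length ≤ N := by simp at hqlen ⊢; omega
              rcases ihN q q' b a hqq hba with ⟨rfl, _⟩ | ⟨_, s3, g7, g8⟩ | ⟨ha3, _⟩
              · exact absurd hf2 (by intro hh; rcases hh with hh | hh <;> omega)
              · -- far b a : g7 : Rel q (a::s3), g8 : Rel q' (b::s3)
                refine Or.inr (Or.inl ⟨hf2, c :: a :: b :: c :: s3, ?_, ?_⟩)
                · -- u = c a t ≡ c a b c q ≡ c a b c a s3 ≡ c b a c a s3 ≡ c b c a c s3 ≡ b c b a c s3 ≡ b c a b c s3
                  refine ((((g3.cons a).cons c).trans')) ?_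
                  refine (((((g7.cons c).cons b).cons a).cons c).trans') ?_
                  refine ((((rel_comm hf2 (c::a::s3)).cons c)).trans') ?_
                  refine (((rel_braid hfac s3).cons b).cons c).trans' ?_
                  refine ((rel_braid ha (a::c::s3)).trans') ?_
                  exact (((rel_comm hf2.symm (c::s3)).cons c).cons b)
                · -- v ≡ c b w ≡ c b a c q' ≡ c b a c b s3 ≡ c a b c b s3 ≡ c a c b c s3 ≡ a c a b c s3
                  refine h2.trans' ?_
                  refine (((g5.cons b).cons c).trans') ?_
                  refine (((((g8.cons c).cons a).cons b).cons c).trans') ?_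
                  refine (((rel_comm hf2.symm (c::b::s3)).cons c).trans') ?_
                  refine ((((rel_braid ha.symm s3).cons a).cons c).trans') ?_
                  exact (rel_braid hfac.symm (b::c::s3))
              · exact absurd hf2 (by rcases ha3 with h | h <;> intro hh <;> rcases hh with hh | hh <;> omega)
        · -- B2.3.3 adj a b : impossible
          exact absurd ha2 (by rcases ha with h | h <;> rcases hfac with h' | h' <;> intro hh <;> rcases hh with hh | hh <;> omega)

lemma key (N : ℕ) : ∀ (u v : List (Fin (n-1))) (a b : Fin (n-1)),
    u.length ≤ N → Rel n (a :: u) (b :: v) → Out a b u v := by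
  induction N with
  | zero =>
    intro u v a b hlen hrel
    have hu : u = [] := List.eq_nil_of_length_eq_zero (Nat.le_zero.mp hlen)
    subst hu
    have := rel_singleton hrel
    rw [List.cons.injEq] at this
    exact Or.inl ⟨this.1.symm, this.2 ▸ Rel.refl'⟩
  | succ N ihN =>
    intro u v a b hlen hrel
    exact key_succ N ihN (a :: u) b v hrel a u rfl hlen

lemma rel_cancel {a : Fin (n-1)} {u v : List (Fin (n-1))} (h : Rel n (a :: u) (a :: v)) :
    Rel n u v := by
  rcases key u.length u v a a le_rfl h with ⟨_, h⟩ | ⟨hf, _⟩ | ⟨ha, _⟩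
  · exact h
  · exact absurd hf (by intro hh; rcases hh with hh | hh <;> omega)
  · exact absurd ha (by intro hh; rcases hh with hh | hh <;> omega)


lemma sstep_conGen {u v : List (Fin (n-1))} (h : SStep n u v) :
    conGen (BraidRel n) (FreeMonoid.ofList u) (FreeMonoid.ofList v) := by
  have base : ∀ {u v : List (Fin (n-1))}, Step n u v →
      conGen (BraidRel n) (FreeMonoid.ofList u) (FreeMonoid.ofList v) := by
    intro u v h
    cases h with
    | comm l r i j hij =>
      have : ∀ m : List (Fin (n-1)), FreeMonoid.ofList (l ++ m) =
          FreeMonoid.ofList l * FreeMonoid.ofList m := fun m => rfl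
      rw [this, this]
      exact ConGen.Rel.mul (ConGen.Rel.refl _) (by
        have e1 : FreeMonoid.ofList (i :: j :: r) =
            (FreeMonoid.of i * FreeMonoid.of j) * FreeMonoid.ofList r := by
          rw [FreeMonoid.ofList_cons, FreeMonoid.ofList_cons, mul_assoc]
        have e2 : FreeMonoid.ofList (j :: i :: r) =
            (FreeMonoid.of j * FreeMonoid.of i) * FreeMonoid.ofList r := by
          rw [FreeMonoid.ofList_cons, FreeMonoid.ofList_cons, mul_assoc]
        rw [e1, e2]
        exact ConGen.Rel.mul (ConGen.Rel.of _ _ (BraidRel.comm i j hij)) (ConGen.Rel.refl _))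
    | braid l r i j hij =>
      have : ∀ m : List (Fin (n-1)), FreeMonoid.ofList (l ++ m) =
          FreeMonoid.ofList l * FreeMonoid.ofList m := fun m => rfl
      rw [this, this]
      exact ConGen.Rel.mul (ConGen.Rel.refl _) (by
        have e1 : FreeMonoid.ofList (i :: j :: i :: r) =
            (FreeMonoid.of i * FreeMonoid.of j * FreeMonoid.of i) * FreeMonoid.ofList r := by
          rw [FreeMonoid.ofList_cons, FreeMonoid.ofList_cons, FreeMonoid.ofList_cons,
            mul_assoc, mul_assoc]
        have e2 : FreeMonoid.ofList (j :: i :: j :: r) =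
            (FreeMonoid.of j * FreeMonoid.of i * FreeMonoid.of j) * FreeMonoid.ofList r := by
          rw [FreeMonoid.ofList_cons, FreeMonoid.ofList_cons, FreeMonoid.ofList_cons,
            mul_assoc, mul_assoc]
        rw [e1, e2]
        exact ConGen.Rel.mul (ConGen.Rel.of _ _ (BraidRel.braid i j hij)) (ConGen.Rel.refl _))
  rcases h with h | h
  · exact base h
  · exact ConGen.Rel.symm (base h)

lemma conGen_iff_rel {u v : FreeMonoid (Fin (n-1))} :
    conGen (BraidRel n) u v ↔ Rel n (FreeMonoid.toList u) (FreeMonoid.toList v) := by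
  constructor
  · intro h
    induction h with
    | of x y hxy =>
      cases hxy with
      | comm i j hij =>
        exact Relation.ReflTransGen.single (Or.inl (Step.comm [] [] i j hij))
      | braid i j hij =>
        exact Relation.ReflTransGen.single (Or.inl (Step.braid [] [] i j hij))
    | refl x => exact Rel.refl'
    | symm _ ih => exact ih.symm'
    | trans _ _ ih1 ih2 => exact ih1.trans' ih2
    | mul _ _ ih1 ih2 => exact ih1.append ih2
  · intro h
    have : ∀ {a b : List (Fin (n-1))}, Rel n a b →
        conGen (BraidRel n) (FreeMonoid.ofList a) (FreeMonoid.ofList b) := by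
      intro a b h
      induction h with
      | refl => exact ConGen.Rel.refl _
      | tail _ h2 ih => exact ConGen.Rel.trans ih (sstep_conGen h2)
    exact this h

/-- Build an element of the braid monoid from a word. -/
def mkl (n : ℕ) (l : List (Fin (n-1))) : BraidMonoid n :=
  (conGen (BraidRel n)).mk' (FreeMonoid.ofList l)

lemma mkl_nil : mkl n [] = 1 := rfl

lemma mkl_cons (i : Fin (n-1)) (l : List (Fin (n-1))) :
    mkl n (i :: l) = gen i * mkl n l := by
  unfold mkl gen
  rw [FreeMonoid.ofList_cons, map_mul]
  rfl

lemma mkl_surjective (z : BraidMonoid n) : ∃ l, mkl n l = z := by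
  obtain ⟨w, hw⟩ := Con.mk'_surjective (c := conGen (BraidRel n)) z
  exact ⟨FreeMonoid.toList w, hw⟩

lemma mkl_eq_iff {u v : List (Fin (n-1))} : mkl n u = mkl n v ↔ Rel n u v := by
  unfold mkl
  have h := Con.eq (c := conGen (BraidRel n)) (a := FreeMonoid.ofList u) (b := FreeMonoid.ofList v)
  have hm : ∀ w : FreeMonoid (Fin (n-1)),
      (conGen (BraidRel n)).mk' w = (w : (conGen (BraidRel n)).Quotient) := fun _ => rfl
  rw [hm, hm]
  refine h.trans ?_
  exact conGen_iff_rel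

lemma gen_cancel {i : Fin (n-1)} {u v : BraidMonoid n} (h : gen i * u = gen i * v) : u = v := by
  obtain ⟨lu, rfl⟩ := mkl_surjective u
  obtain ⟨lv, rfl⟩ := mkl_surjective v
  rw [← mkl_cons, ← mkl_cons, mkl_eq_iff] at h
  exact mkl_eq_iff.mpr (rel_cancel h)

lemma braid_mul_left_cancel {x u v : BraidMonoid n} (h : x * u = x * v) : u = v := by
  obtain ⟨l, rfl⟩ := mkl_surjective x
  induction l with
  | nil => rw [mkl_nil, one_mul, one_mul] at h; exact h
  | cons i l ih =>
    rw [mkl_cons, mul_assoc, mul_assoc] at h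
    exact ih (gen_cancel h)

lemma exists_cons_of_ne_one {z : BraidMonoid n} (h : z ≠ 1) :
    ∃ (i : Fin (n-1)) (z' : BraidMonoid n), z = gen i * z' := by
  obtain ⟨l, rfl⟩ := mkl_surjective z
  cases l with
  | nil => exact absurd mkl_nil h
  | cons i l => exact ⟨i, mkl n l, mkl_cons i l⟩

end Aux

/-- Any nonnegative summable weight on `Br_n` giving mass
`p^{ℓ(x)}` to every visual cylinder is given on singletons by inclusion–exclusion:
`w(x) = H_n(p)·p^{ℓ(x)}`. -/
theorem uniform_weight_singletons (n : ℕ) (hn : 2 ≤ n)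
    (len : BraidMonoid n → ℕ)
    (hlen_mul : ∀ x y : BraidMonoid n, len (x * y) = len x + len y)
    (hlen_gen : ∀ i : Fin (n - 1), len (gen i) = 1)
    (Δhat : Finset (Fin (n - 1)) → BraidMonoid n)
    (hlub_l : ∀ X : Finset (Fin (n - 1)),
      (∀ i ∈ X, ldvd (gen i) (Δhat X)) ∧
        ∀ z : BraidMonoid n, (∀ i ∈ X, ldvd (gen i) z) → ldvd (Δhat X) z)
    (hlub_r : ∀ X : Finset (Fin (n - 1)),
      (∀ i ∈ X, rdvd (gen i) (Δhat X)) ∧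
        ∀ z : BraidMonoid n, (∀ i ∈ X, rdvd (gen i) z) → rdvd (Δhat X) z)
    (p : ℝ) (hp : 0 ≤ p)
    (w : BraidMonoid n → ℝ) (hw0 : ∀ x : BraidMonoid n, 0 ≤ w x)
    (hws : Summable w)
    (hcyl : ∀ x : BraidMonoid n, (∑' y : {y : BraidMonoid n // ldvd x y}, w y.1) = p ^ len x) :
    ∀ x : BraidMonoid n,
      w x = p ^ len x *
        ∑ X : Finset (Fin (n - 1)), (-1 : ℝ) ^ X.card * p ^ len (Δhat X) := by
  intro x
  classical
  -- basic length facts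
  have len1 : len (1 : BraidMonoid n) = 0 := by
    have := hlen_mul 1 1; rw [one_mul] at this; omega
  have len_zero_eq_one : ∀ z : BraidMonoid n, len z = 0 → z = 1 := by
    intro z hz
    obtain ⟨l, rfl⟩ := mkl_surjective z
    cases l with
    | nil => exact mkl_nil
    | cons i l =>
      rw [mkl_cons, hlen_mul, hlen_gen] at hz
      omega
  have hDempty : Δhat ∅ = 1 := by
    obtain ⟨z, hz⟩ := (hlub_l ∅).2 1 (by intro i hi; exact absurd hi (Finset.notMem_empty i))
    have h0 := hlen_mul (Δhat ∅) z
    rw [← hz, len1] at h0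
    exact len_zero_eq_one _ (by omega)
  have hlen_pos : ∀ X : Finset (Fin (n-1)), X.Nonempty → 1 ≤ len (Δhat X) := by
    rintro X ⟨i, hi⟩
    obtain ⟨d, hd⟩ := (hlub_l X).1 i hi
    rw [hd, hlen_mul, hlen_gen i]
    omega
  -- the pointwise inclusion-exclusion identity
  have hpoint : ∀ y : BraidMonoid n,
      (∑ X : Finset (Fin (n-1)),
        (-1 : ℝ) ^ X.card * Set.indicator {t | ldvd (x * Δhat X) t} w y)
      = Set.indicator ({x} : Set (BraidMonoid n)) w y := by
    intro y
    by_cases hxy : ldvd x y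
    · obtain ⟨z, rfl⟩ := hxy
      by_cases hz1 : z = 1
      · subst hz1
        rw [mul_one]
        rw [Finset.sum_eq_single_of_mem ∅ (Finset.mem_univ _) ?side]
        · have hmem : x ∈ {t | ldvd (x * Δhat (∅ : Finset (Fin (n-1)))) t} := by
            rw [hDempty, mul_one]; exact ⟨1, (mul_one x).symm⟩
          rw [Set.indicator_of_mem hmem]
          simp [Set.indicator_of_mem (Set.mem_singleton x)]
        case side =>
          intro X _ hXne
          have hnot : ¬ ldvd (x * Δhat X) x := by
            rintro ⟨d, hd⟩
            rw [mul_assoc] at hd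
            have h1 : x * 1 = x * (Δhat X * d) := by rw [mul_one]; exact hd
            have h2 := braid_mul_left_cancel h1
            have h3 := hlen_mul (Δhat X) d
            rw [← h2, len1] at h3
            have := hlen_pos X (Finset.nonempty_iff_ne_empty.mpr hXne)
            omega
          have hnot' : x ∉ {t | ldvd (x * Δhat X) t} := hnot
          have hz0 : Set.indicator {t | ldvd (x * Δhat X) t} w x = 0 :=
            Set.indicator_of_notMem hnot' w
          rw [hz0, mul_zero]
      · -- z ≠ 1
        have hyne : x * z ≠ x := by
          intro h
          exact hz1 (braid_mul_left_cancel (u := z) (v := 1) (by rw [mul_one]; exact h))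
        obtain ⟨i0, z', hz'⟩ := exists_cons_of_ne_one hz1
        set S : Finset (Fin (n-1)) := Finset.univ.filter (fun i => ldvd (gen i) z) with hS
        have hSne : S.Nonempty := ⟨i0, by
          rw [hS, Finset.mem_filter]
          exact ⟨Finset.mem_univ _, ⟨z', hz'⟩⟩⟩
        have hcond : ∀ X : Finset (Fin (n-1)), ldvd (x * Δhat X) (x * z) ↔ X ⊆ S := by
          intro X
          constructor
          · rintro ⟨d, hd⟩ i hi
            obtain ⟨e, he⟩ := (hlub_l X).1 i hi
            have h1 : x * z = x * (gen i * (e * d)) := by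
              rw [hd, he]; simp only [mul_assoc]
            have h2 := braid_mul_left_cancel h1
            rw [hS, Finset.mem_filter]
            exact ⟨Finset.mem_univ _, ⟨e * d, h2⟩⟩
          · intro hXS
            obtain ⟨d, hd⟩ := (hlub_l X).2 z (by
              intro i hi
              have := hXS hi
              rw [hS, Finset.mem_filter] at this
              exact this.2)
            exact ⟨d, by rw [hd, mul_assoc]⟩
        have hterm : ∀ X : Finset (Fin (n-1)),
            (-1 : ℝ) ^ X.card * Set.indicator {t | ldvd (x * Δhat X) t} w (x * z)
            = if X ⊆ S then (-1 : ℝ) ^ X.card * w (x * z) else 0 := by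
          intro X
          by_cases hXS : X ⊆ S
          · have hm : (x * z) ∈ {t | ldvd (x * Δhat X) t} := (hcond X).mpr hXS
            rw [if_pos hXS, Set.indicator_of_mem hm]
          · have hm : (x * z) ∉ {t | ldvd (x * Δhat X) t} := fun hc => hXS ((hcond X).mp hc)
            rw [if_neg hXS, Set.indicator_of_notMem hm, mul_zero]
        rw [Finset.sum_congr rfl (fun X _ => hterm X), ← Finset.sum_filter]
        have hfil : (Finset.univ.filter (fun X : Finset (Fin (n-1)) => X ⊆ S)) = S.powerset := by
          ext X
          simp [Finset.mem_powerset]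
        rw [hfil, ← Finset.sum_mul]
        have hps : (∑ X ∈ S.powerset, (-1 : ℝ) ^ X.card) = 0 := by
          have hz : (∑ X ∈ S.powerset, (-1 : ℤ) ^ X.card) = 0 :=
            Finset.sum_powerset_neg_one_pow_card_of_nonempty hSne
          have : ((∑ X ∈ S.powerset, (-1 : ℤ) ^ X.card : ℤ) : ℝ)
              = ∑ X ∈ S.powerset, (-1 : ℝ) ^ X.card := by push_cast; rfl
          rw [← this, hz]; norm_num
        rw [hps, zero_mul, Set.indicator_of_notMem (by simpa using hyne)]
    · -- x does not divide y
      have hy0 : ∀ X : Finset (Fin (n-1)),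
          Set.indicator {t | ldvd (x * Δhat X) t} w y = 0 := by
        intro X
        have hm : y ∉ {t | ldvd (x * Δhat X) t} := by
          rintro ⟨d, hd⟩
          exact hxy ⟨Δhat X * d, by rw [hd, mul_assoc]⟩
        exact Set.indicator_of_notMem hm w
      have hyx : y ≠ x := fun h => hxy ⟨1, by rw [h, mul_one]⟩
      rw [Finset.sum_congr rfl (fun X _ => by rw [hy0 X, mul_zero]),
        Finset.sum_const, smul_zero, Set.indicator_of_notMem (by simpa using hyx)]
  -- measure of each cylinder
  have hmeas : ∀ X : Finset (Fin (n-1)),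
      (∑' y : BraidMonoid n, Set.indicator {t | ldvd (x * Δhat X) t} w y)
      = p ^ len x * p ^ len (Δhat X) := by
    intro X
    rw [← tsum_subtype, ← pow_add, ← hlen_mul]
    exact hcyl (x * Δhat X)
  have hind : ∀ X : Finset (Fin (n-1)),
      Summable (fun y => Set.indicator {t | ldvd (x * Δhat X) t} w y) :=
    fun X => hws.indicator _
  have hsing : (∑' y : BraidMonoid n, Set.indicator ({x} : Set (BraidMonoid n)) w y) = w x := by
    have e : ∀ y : BraidMonoid n,
        Set.indicator ({x} : Set (BraidMonoid n)) w y = if y = x then w x else 0 := by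
      intro y
      by_cases h : y = x
      · subst h; simp
      · rw [Set.indicator_of_notMem (by simpa using h), if_neg h]
    rw [tsum_congr e]
    exact tsum_ite_eq x (fun _ => w x)
  calc w x = ∑' y : BraidMonoid n, Set.indicator ({x} : Set (BraidMonoid n)) w y := hsing.symm
    _ = ∑' y : BraidMonoid n, ∑ X : Finset (Fin (n-1)),
          (-1 : ℝ) ^ X.card * Set.indicator {t | ldvd (x * Δhat X) t} w y :=
        tsum_congr (fun y => (hpoint y).symm)
    _ = ∑ X : Finset (Fin (n-1)), ∑' y : BraidMonoid n,
          (-1 : ℝ) ^ X.card * Set.indicator {t | ldvd (x * Δhat X) t} w y :=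
        Summable.tsum_finsetSum (fun X _ => ((hind X).mul_left _))
    _ = ∑ X : Finset (Fin (n-1)), (-1 : ℝ) ^ X.card * (p ^ len x * p ^ len (Δhat X)) :=
        Finset.sum_congr rfl (fun X _ => by rw [tsum_mul_left, hmeas X])
    _ = p ^ len x * ∑ X : Finset (Fin (n-1)), (-1 : ℝ) ^ X.card * p ^ len (Δhat X) := by
        rw [Finset.mul_sum]
        exact Finset.sum_congr rfl (fun X _ => by ring)


end BraidMeasure
end

section
/- For every real number t, Σ_{X ⊆ Σ} (−1)^{|X|} t^{ℓ(Δ̂(X))} = H_n(t), where the sum is over all subsets X of the generating set Σ of Br_n and H_n is the Möbius polynomial defined by the recursion H_0 = H_1 = 1, H_n(t) = Σ_{k=1}^{n} (−1)^{k+1} t^{k(k−1)/2} H_{n−k}(t). -/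
open scoped Classical

namespace BraidMeasure

def sortStep (i : ℕ) : (ℕ → ℕ) → (ℕ → ℕ) := fun s j =>
  if j = i then max (s i) (s (i+1)) else if j = i+1 then min (s i) (s (i+1)) else s j

set_option maxHeartbeats 1000000 in
lemma sortStep_comm (i j : ℕ) (h : i + 2 ≤ j) :
    sortStep i ∘ sortStep j = sortStep j ∘ sortStep i := by
  funext s k
  simp only [Function.comp, sortStep]
  split_ifs <;> omega

set_option maxHeartbeats 1000000 in
lemma sortStep_braid (i : ℕ) :
    (sortStep i ∘ sortStep (i+1)) ∘ sortStep i
      = (sortStep (i+1) ∘ sortStep i) ∘ sortStep (i+1) := by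
  funext s k
  simp only [Function.comp, sortStep]
  split_ifs <;> omega

/-- The sorting (0-Hecke-style) representation. -/
noncomputable def hecke {n : ℕ} : BraidMonoid n →* Function.End (ℕ → ℕ) :=
  Con.lift _ (FreeMonoid.lift fun i : Fin (n-1) => (sortStep i : Function.End (ℕ → ℕ)))
    (by
      refine Con.conGen_le.mpr ?_
      rintro x y (⟨i, j, h⟩ | ⟨i, j, h⟩) <;>
        simp only [Con.ker_rel, map_mul, FreeMonoid.lift_eval_of]
      · exact sortStep_comm i j h
      · obtain ⟨j, hj⟩ := j
        obtain rfl : j = i + 1 := h.symm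
        exact sortStep_braid i)

def swp (i j : ℕ) : ℕ := if j = i then i+1 else if j = i+1 then i else j

lemma sortStep_eq_self {i : ℕ} {s : ℕ → ℕ} (h : s (i+1) ≤ s i) : sortStep i s = s := by
  funext j; simp only [sortStep]
  split_ifs with h1 h2
  · subst h1; omega
  · subst h2; omega
  · rfl

lemma sortStep_eq_swap {i : ℕ} {s : ℕ → ℕ} (h : s i < s (i+1)) :
    sortStep i s = fun j => s (swp i j) := by
  funext j; simp only [sortStep, swp]; split_ifs <;> omega

lemma swp_inj (i : ℕ) : Function.Injective (swp i) := by
  intro a b; simp only [swp]; split_ifs <;> omega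

lemma sortStep_inj {i : ℕ} {s : ℕ → ℕ} (h : Function.Injective s) :
    Function.Injective (sortStep i s) := by
  rcases le_or_gt (s (i+1)) (s i) with h1 | h1
  · rw [sortStep_eq_self h1]; exact h
  · rw [sortStep_eq_swap h1]; exact h.comp (swp_inj i)

lemma exists_word {n : ℕ} (x : BraidMonoid n) :
    ∃ l : List (Fin (n-1)), x = (l.map gen).prod := by
  obtain ⟨w, rfl⟩ := Con.mk'_surjective x
  induction w using FreeMonoid.recOn with
  | one => exact ⟨[], rfl⟩
  | of_mul i w ih =>
      obtain ⟨l, hl⟩ := ih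
      exact ⟨i :: l, by simp [map_mul, ← hl]; rfl⟩

lemma hecke_gen {n : ℕ} (i : Fin (n-1)) :
    (hecke (gen i) : Function.End (ℕ → ℕ)) = sortStep i := by
  show (conGen (BraidRel n)).lift _ _ ((conGen (BraidRel n)).mk' (FreeMonoid.of i)) = _
  rw [Con.lift_mk']
  exact FreeMonoid.lift_eval_of (fun i : Fin (n-1) => (sortStep i : Function.End (ℕ → ℕ))) i

lemma hecke_inj {n : ℕ} (x : BraidMonoid n) {s : ℕ → ℕ} (h : Function.Injective s) :
    Function.Injective ((hecke x : Function.End (ℕ → ℕ)) s) := by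
  obtain ⟨l, rfl⟩ := exists_word x
  induction l generalizing s with
  | nil => exact h
  | cons i l ih =>
      simp only [List.map_cons, List.prod_cons, map_mul, hecke_gen]
      exact sortStep_inj (ih h)

def invCount (n : ℕ) (s : ℕ → ℕ) : ℕ :=
  ((Finset.range n ×ˢ Finset.range n).filter fun p => p.1 < p.2 ∧ s p.2 < s p.1).card

lemma invCount_sortStep {n i : ℕ} (hi : i + 1 < n) (s : ℕ → ℕ) :
    invCount n (sortStep i s) ≤ invCount n s + 1 := by
  rcases le_or_gt (s (i+1)) (s i) with h1 | h1
  · rw [sortStep_eq_self h1]; omega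
  · rw [sortStep_eq_swap h1]
    set A := ((Finset.range n ×ˢ Finset.range n).filter
      fun p => p.1 < p.2 ∧ s (swp i p.2) < s (swp i p.1)) with hA
    set B := ((Finset.range n ×ˢ Finset.range n).filter
      fun p => p.1 < p.2 ∧ s p.2 < s p.1) with hB
    have key : (A.erase (i, i+1)).card ≤ B.card := by
      apply Finset.card_le_card_of_injOn (fun p => (swp i p.1, swp i p.2))
      · intro p hp
        simp only [Finset.mem_coe, Finset.mem_erase, hA, Finset.mem_filter, Finset.mem_product,
          Finset.mem_range] at hp
        obtain ⟨hne, ⟨⟨hp1, hp2⟩, hlt, hs⟩⟩ := hp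
        simp only [Finset.mem_coe, hB, Finset.mem_filter, Finset.mem_product, Finset.mem_range]
        have h1 : swp i p.1 < n := by simp only [swp]; split_ifs <;> omega
        have h2 : swp i p.2 < n := by simp only [swp]; split_ifs <;> omega
        refine ⟨⟨h1, h2⟩, ?_, hs⟩
        have : ¬ (p.1 = i ∧ p.2 = i + 1) := by
          intro ⟨e1, e2⟩; exact hne (Prod.ext e1 e2)
        simp only [swp]; split_ifs <;> omega
      · intro a _ b _ hab
        have h1 := swp_inj i (congrArg Prod.fst hab)
        have h2 := swp_inj i (congrArg Prod.snd hab)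
        exact Prod.ext h1 h2
    have : A.card ≤ (A.erase (i, i+1)).card + 1 := by
      rcases Finset.decidableMem (i, i+1) A with h | h
      · rw [Finset.erase_eq_of_notMem h]; omega
      · rw [Finset.card_erase_of_mem h]; omega
    simpa [invCount, ← hA, ← hB] using this.trans (by omega)

lemma invCount_word {n N : ℕ} (l : List (Fin (n-1))) (hn : n - 1 + 1 ≤ N) (s : ℕ → ℕ) :
    invCount N ((hecke ((l.map gen).prod) : Function.End (ℕ → ℕ)) s)
      ≤ invCount N s + l.length := by
  induction l generalizing s with
  | nil =>
      simp only [List.map_nil, List.prod_nil, map_one, List.length_nil, Nat.add_zero]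
      exact le_of_eq rfl
  | cons i l ih =>
      simp only [List.map_cons, List.prod_cons, map_mul, hecke_gen]
      have h1 : (i : ℕ) + 1 < N := by have := i.isLt; omega
      calc invCount N (sortStep i ((hecke ((l.map gen).prod) : Function.End (ℕ → ℕ)) s))
          ≤ invCount N ((hecke ((l.map gen).prod) : Function.End (ℕ → ℕ)) s) + 1 :=
            invCount_sortStep h1 _
        _ ≤ invCount N s + l.length + 1 := by have := ih s; omega
        _ = invCount N s + (i :: l).length := by simp; omega

/-- Pairs (a,b), a ≤ b, with the whole interval [a,b] inside X. -/
def wpairs (X : Finset ℕ) : Finset (ℕ × ℕ) :=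
  (X ×ˢ X).filter fun p => p.1 ≤ p.2 ∧ ∀ c, p.1 ≤ c → c ≤ p.2 → c ∈ X

def W (X : Finset ℕ) : ℕ := (wpairs X).card

lemma descent_chain {u : ℕ → ℕ} {X : Finset ℕ} (hdesc : ∀ i ∈ X, u (i+1) < u i)
    {a : ℕ} : ∀ b, a ≤ b → (∀ c, a ≤ c → c ≤ b → c ∈ X) → u (b+1) < u a := by
  intro b
  induction b with
  | zero =>
      intro hab hc
      have ha : a = 0 := by omega
      subst ha
      exact hdesc 0 (hc 0 le_rfl le_rfl)
  | succ b ih =>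
      intro hab hc
      rcases Nat.eq_or_lt_of_le hab with rfl | hlt
      · exact hdesc _ (hc _ le_rfl le_rfl)
      · have h1 := hdesc (b+1) (hc (b+1) (by omega) le_rfl)
        have h2 := ih (by omega) (fun c h1 h2 => hc c h1 (by omega))
        omega

lemma W_le_invCount {n : ℕ} {u : ℕ → ℕ} {X : Finset ℕ}
    (hX : ∀ i ∈ X, i + 1 < n) (hdesc : ∀ i ∈ X, u (i+1) < u i) :
    W X ≤ invCount n u := by
  unfold W invCount
  apply Finset.card_le_card_of_injOn (fun p => (p.1, p.2 + 1))
  · intro p hp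
    simp only [Finset.mem_coe, wpairs, Finset.mem_filter, Finset.mem_product] at hp
    obtain ⟨⟨hp1, hp2⟩, hle, hint⟩ := hp
    simp only [Finset.mem_coe, Finset.mem_filter, Finset.mem_product, Finset.mem_range]
    have h1 : p.1 + 1 < n := hX _ hp1
    have h2 : p.2 + 1 < n := hX _ hp2
    exact ⟨⟨by omega, by omega⟩, by omega, descent_chain hdesc p.2 hle hint⟩
  · intro a _ b _ hab
    have h1 := congrArg Prod.fst hab
    have h2 := congrArg Prod.snd hab
    exact Prod.ext h1 (by simpa using h2)

lemma descent_of_ldvd {n : ℕ} {x : BraidMonoid n} {i : Fin (n-1)}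
    (h : ldvd (gen i) x) :
    ((hecke x : Function.End (ℕ → ℕ)) id) ((i : ℕ)+1)
      < ((hecke x : Function.End (ℕ → ℕ)) id) (i : ℕ) := by
  obtain ⟨z, rfl⟩ := h
  have hinj : Function.Injective ((hecke z : Function.End (ℕ → ℕ)) id) :=
    hecke_inj z Function.injective_id
  set v := (hecke z : Function.End (ℕ → ℕ)) id with hv
  have hne : v (i : ℕ) ≠ v ((i : ℕ)+1) := fun h => by
    have := hinj h; omega
  have : (hecke (gen i * z) : Function.End (ℕ → ℕ)) id = sortStep i v := by
    rw [map_mul, hecke_gen]; rfl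
  rw [this]
  simp only [sortStep]
  split_ifs <;> omega

lemma mk_rel {n : ℕ} {a b : FreeMonoid (Fin (n-1))} (h : BraidRel n a b) :
    (conGen (BraidRel n)).mk' a = (conGen (BraidRel n)).mk' b := by
  show (a : (conGen (BraidRel n)).Quotient) = b
  exact (Con.eq _).mpr (ConGen.Rel.of _ _ h)

lemma gen_mul {n : ℕ} (i j : Fin (n-1)) :
    gen i * gen j = (conGen (BraidRel n)).mk' (FreeMonoid.of i * FreeMonoid.of j) :=
  (map_mul _ _ _).symm

lemma gen_mul3 {n : ℕ} (i j k : Fin (n-1)) :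
    gen i * gen j * gen k
      = (conGen (BraidRel n)).mk' (FreeMonoid.of i * FreeMonoid.of j * FreeMonoid.of k) := by
  rw [gen_mul]; exact (map_mul _ _ _).symm

lemma gen'_eq_one {n : ℕ} {i : ℕ} (h : ¬ i < n-1) : (gen' i : BraidMonoid n) = 1 :=
  dif_neg h

lemma gen'_eq_gen {n : ℕ} {i : ℕ} (h : i < n-1) :
    (gen' i : BraidMonoid n) = gen ⟨i, h⟩ := dif_pos h

lemma gen'_comm {n : ℕ} {i j : ℕ} (h : i + 2 ≤ j) :
    (gen' i : BraidMonoid n) * gen' j = gen' j * gen' i := by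
  by_cases hi : i < n - 1
  · by_cases hj : j < n - 1
    · rw [gen'_eq_gen hi, gen'_eq_gen hj, gen_mul, gen_mul]
      exact mk_rel (BraidRel.comm ⟨i, hi⟩ ⟨j, hj⟩ h)
    · rw [gen'_eq_one hj, mul_one, one_mul]
  · rw [gen'_eq_one hi, mul_one, one_mul]

lemma gen'_comm' {n : ℕ} {i j : ℕ} (h : i + 2 ≤ j ∨ j + 2 ≤ i) :
    (gen' i : BraidMonoid n) * gen' j = gen' j * gen' i := by
  rcases h with h | h
  · exact gen'_comm h
  · exact (gen'_comm h).symm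

lemma gen'_braid {n : ℕ} {i : ℕ} (h : i + 1 < n - 1) :
    (gen' i : BraidMonoid n) * gen' (i+1) * gen' i
      = gen' (i+1) * gen' i * gen' (i+1) := by
  have hi : i < n - 1 := by omega
  rw [gen'_eq_gen hi, gen'_eq_gen h, gen_mul3, gen_mul3]
  exact mk_rel (BraidRel.braid ⟨i, hi⟩ ⟨i+1, h⟩ rfl)

/-- The row `σ_a σ_{a+1} ⋯ σ_{a+k-1}`. -/
def rowB {n : ℕ} : ℕ → ℕ → BraidMonoid n
  | _, 0 => 1
  | a, (k+1) => gen' a * rowB (a+1) k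

/-- `Δ` on the generators `a, …, a+k-1`. -/
def deltaB {n : ℕ} : ℕ → ℕ → BraidMonoid n
  | _, 0 => 1
  | a, (k+1) => rowB a (k+1) * deltaB a k

lemma rowB_comm {n : ℕ} {j : ℕ} : ∀ {a k : ℕ}, (a + k + 1 ≤ j ∨ j + 2 ≤ a) →
    (gen' j : BraidMonoid n) * rowB a k = rowB a k * gen' j := by
  intro a k
  induction k generalizing a with
  | zero => intro _; simp [rowB]
  | succ k ih =>
      intro h
      have h1 : (gen' j : BraidMonoid n) * gen' a = gen' a * gen' j :=
        gen'_comm' (by omega)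
      show (gen' j : BraidMonoid n) * (gen' a * rowB (a+1) k) = (gen' a * rowB (a+1) k) * gen' j
      rw [← mul_assoc, h1, mul_assoc, ih (by omega), mul_assoc]

lemma deltaB_comm {n : ℕ} {j : ℕ} : ∀ {a k : ℕ}, (a + k + 1 ≤ j) →
    (gen' j : BraidMonoid n) * deltaB a k = deltaB a k * gen' j := by
  intro a k
  induction k generalizing a with
  | zero => intro _; simp [deltaB]
  | succ k ih =>
      intro h
      show (gen' j : BraidMonoid n) * (rowB a (k+1) * deltaB a k) = _
      rw [← mul_assoc, rowB_comm (by omega), mul_assoc, ih (by omega), ← mul_assoc]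
      rfl

lemma rowB_shift {n : ℕ} : ∀ {k a j : ℕ}, a < j → j < a + k → a + k ≤ n - 1 →
    (gen' j : BraidMonoid n) * rowB a k = rowB a k * gen' (j-1) := by
  intro k
  induction k with
  | zero => intro a j h1 h2 _; omega
  | succ k ih =>
      intro a j h1 h2 hr
      show (gen' j : BraidMonoid n) * (gen' a * rowB (a+1) k) = _
      rcases Nat.lt_or_ge (a+1) j with hj | hj
      · -- j ≥ a + 2 : commute past gen' a, use ih
        rw [← mul_assoc, gen'_comm' (Or.inr (by omega)), mul_assoc,
          ih hj (by omega) (by omega), ← mul_assoc]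
        rfl
      · -- j = a + 1
        have hja : j = a + 1 := by omega
        subst hja
        obtain ⟨m, rfl⟩ : ∃ m, k = m + 1 := ⟨k - 1, by omega⟩
        show (gen' (a+1) : BraidMonoid n) * (gen' a * (gen' (a+1) * rowB (a+2) m)) = _
        have hbr : (gen' a : BraidMonoid n) * gen' (a+1) * gen' a
            = gen' (a+1) * gen' a * gen' (a+1) := gen'_braid (by omega)
        have hcm : (gen' a : BraidMonoid n) * rowB (a+2) m = rowB (a+2) m * gen' a :=
          rowB_comm (Or.inr (by omega))
        calc (gen' (a+1) : BraidMonoid n) * (gen' a * (gen' (a+1) * rowB (a+2) m))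
            = (gen' (a+1) * gen' a * gen' (a+1)) * rowB (a+2) m := by
              simp [mul_assoc]
          _ = (gen' a * gen' (a+1) * gen' a) * rowB (a+2) m := by rw [← hbr]
          _ = gen' a * (gen' (a+1) * (gen' a * rowB (a+2) m)) := by simp [mul_assoc]
          _ = gen' a * (gen' (a+1) * (rowB (a+2) m * gen' a)) := by rw [hcm]
          _ = (gen' a * (gen' (a+1) * rowB (a+2) m)) * gen' a := by simp [mul_assoc]
          _ = rowB a (m+2) * gen' (a+1-1) := by
              simp only [Nat.add_sub_cancel]
              rfl

lemma deltaB_div {n : ℕ} : ∀ {k a j : ℕ}, a ≤ j → j < a + k → a + k ≤ n - 1 →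
    ∃ z, (deltaB a k : BraidMonoid n) = gen' j * z := by
  intro k
  induction k with
  | zero => intro a j h1 h2 _; omega
  | succ k ih =>
      intro a j h1 h2 hr
      rcases Nat.eq_or_lt_of_le h1 with rfl | hlt
      · refine ⟨rowB (a+1) k * deltaB a k, ?_⟩
        show (gen' a * rowB (a+1) k : BraidMonoid n) * deltaB a k = _
        rw [mul_assoc]
      · obtain ⟨z, hz⟩ := ih (a := a) (j := j-1) (by omega) (by omega) (by omega)
        refine ⟨rowB a (k+1) * z, ?_⟩
        show rowB a (k+1) * deltaB a k = _
        rw [hz, ← mul_assoc, ← rowB_shift hlt (by omega) hr, mul_assoc]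

lemma W_empty : W ∅ = 0 := by simp [W, wpairs]

lemma W_union {A B : Finset ℕ} {g : ℕ} (hA : ∀ a ∈ A, a < g) (hB : ∀ b ∈ B, g < b) :
    W (A ∪ B) = W A + W B := by
  unfold W
  have hdisj : Disjoint (wpairs A) (wpairs B) := by
    rw [Finset.disjoint_left]
    intro p hp hq
    simp only [wpairs, Finset.mem_filter, Finset.mem_product] at hp hq
    have h1 := hA _ hp.1.1
    have h2 := hB _ hq.1.1
    omega
  rw [← Finset.card_union_of_disjoint hdisj]
  congr 1
  ext p
  simp only [wpairs, Finset.mem_filter, Finset.mem_product, Finset.mem_union]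
  constructor
  · rintro ⟨⟨h1, h2⟩, hle, hint⟩
    rcases h2 with h2 | h2
    · -- p.2 ∈ A
      left
      have hp1 : p.1 ∈ A := by
        rcases h1 with h1 | h1
        · exact h1
        · have := hB _ h1; have := hA _ h2; omega
      refine ⟨⟨hp1, h2⟩, hle, fun c hc1 hc2 => ?_⟩
      rcases hint c hc1 hc2 with h | h
      · exact h
      · have := hB _ h; have := hA _ h2; omega
    · -- p.2 ∈ B
      right
      have hp1 : p.1 ∈ B := by
        rcases h1 with h1 | h1
        · -- p.1 ∈ A, p.2 ∈ B : then g in the interval, contradiction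
          have hg1 := hA _ h1
          have hg2 := hB _ h2
          rcases hint g (by omega) (by omega) with h | h
          · have := hA _ h; omega
          · have := hB _ h; omega
        · exact h1
      refine ⟨⟨hp1, h2⟩, hle, fun c hc1 hc2 => ?_⟩
      rcases hint c hc1 hc2 with h | h
      · have := hA _ h; have := hB _ hp1; omega
      · exact h
  · rintro (⟨⟨h1, h2⟩, hle, hint⟩ | ⟨⟨h1, h2⟩, hle, hint⟩)
    · exact ⟨⟨Or.inl h1, Or.inl h2⟩, hle, fun c hc1 hc2 => Or.inl (hint c hc1 hc2)⟩
    · exact ⟨⟨Or.inr h1, Or.inr h2⟩, hle, fun c hc1 hc2 => Or.inr (hint c hc1 hc2)⟩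

lemma W_shift (c : ℕ) (X : Finset ℕ) : W (X.image (· + c)) = W X := by
  unfold W
  apply Finset.card_bij (fun p _ => (p.1 - c, p.2 - c))
  · intro p hp
    simp only [wpairs, Finset.mem_filter, Finset.mem_product, Finset.mem_image] at hp ⊢
    obtain ⟨⟨⟨x1, hx1, he1⟩, ⟨x2, hx2, he2⟩⟩, hle, hint⟩ := hp
    have e1 : p.1 - c = x1 := by omega
    have e2 : p.2 - c = x2 := by omega
    refine ⟨⟨by rw [e1]; exact hx1, by rw [e2]; exact hx2⟩, by omega, ?_⟩
    intro d hd1 hd2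
    have := hint (d + c) (by omega) (by omega)
    obtain ⟨y, hy, hye⟩ := this
    have : y = d := by omega
    subst this; exact hy
  · intro p hp q hq he
    simp only [wpairs, Finset.mem_filter, Finset.mem_product, Finset.mem_image] at hp hq
    obtain ⟨⟨⟨x1, _, he1⟩, ⟨x2, _, he2⟩⟩, _, _⟩ := hp
    obtain ⟨⟨⟨y1, _, hf1⟩, ⟨y2, _, hf2⟩⟩, _, _⟩ := hq
    have g1 := congrArg Prod.fst he
    have g2 := congrArg Prod.snd he
    simp only at g1 g2
    have : p.1 = q.1 := by omega
    have : p.2 = q.2 := by omega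
    exact Prod.ext (by omega) (by omega)
  · intro p hp
    simp only [wpairs, Finset.mem_filter, Finset.mem_product] at hp
    obtain ⟨⟨h1, h2⟩, hle, hint⟩ := hp
    refine ⟨(p.1 + c, p.2 + c), ?_, by simp⟩
    simp only [wpairs, Finset.mem_filter, Finset.mem_product, Finset.mem_image]
    refine ⟨⟨⟨p.1, h1, rfl⟩, ⟨p.2, h2, rfl⟩⟩, by omega, ?_⟩
    intro d hd1 hd2
    exact ⟨d - c, hint (d - c) (by omega) (by omega), by omega⟩

lemma W_range (m : ℕ) : W (Finset.range m) = m * (m + 1) / 2 := by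
  induction m with
  | zero => simp [W, wpairs]
  | succ m ih =>
      have key : wpairs (Finset.range (m+1))
          = wpairs (Finset.range m) ∪ (Finset.range (m+1)).image (fun a => (a, m)) := by
        ext p
        simp only [wpairs, Finset.mem_filter, Finset.mem_product, Finset.mem_union,
          Finset.mem_image, Finset.mem_range]
        constructor
        · rintro ⟨⟨h1, h2⟩, hle, hint⟩
          rcases Nat.lt_or_ge p.2 m with h | h
          · exact Or.inl ⟨⟨by omega, h⟩, hle, fun c hc1 hc2 => by omega⟩
          · right
            exact ⟨p.1, by omega, by rw [Prod.ext_iff]; constructor <;> simp <;> omega⟩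
        · rintro (⟨⟨h1, h2⟩, hle, hint⟩ | ⟨a, ha, rfl⟩)
          · exact ⟨⟨by omega, by omega⟩, hle, fun c hc1 hc2 => by omega⟩
          · exact ⟨⟨by omega, by omega⟩, by simp; omega, fun c hc1 hc2 => by simp at hc1 hc2 ⊢; omega⟩
      have hdisj : Disjoint (wpairs (Finset.range m))
          ((Finset.range (m+1)).image (fun a => (a, m))) := by
        rw [Finset.disjoint_left]
        intro p hp hq
        simp only [wpairs, Finset.mem_filter, Finset.mem_product, Finset.mem_range] at hp
        simp only [Finset.mem_image, Finset.mem_range] at hq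
        obtain ⟨a, _, rfl⟩ := hq
        omega
      have hcard : ((Finset.range (m+1)).image (fun a => (a, m))).card = m + 1 := by
        rw [Finset.card_image_of_injective _ (fun a b h => (Prod.ext_iff.mp h).1)]
        simp
      unfold W
      rw [key, Finset.card_union_of_disjoint hdisj, hcard]
      unfold W at ih
      have hr : m * (m + 1) + 2 * (m + 1) = (m + 1) * (m + 1 + 1) := by ring
      omega

lemma W_Ico (s m : ℕ) : W (Finset.Ico s (s + m)) = m * (m + 1) / 2 := by
  have : Finset.Ico s (s + m) = (Finset.range m).image (· + s) := by
    ext i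
    simp only [Finset.mem_Ico, Finset.mem_image, Finset.mem_range]
    constructor
    · intro h; exact ⟨i - s, by omega, by omega⟩
    · rintro ⟨a, ha, rfl⟩; omega
  rw [this, W_shift, W_range]

section LenSection

variable {n : ℕ} (len : BraidMonoid n → ℕ)
  (hlen_mul : ∀ x y : BraidMonoid n, len (x * y) = len x + len y)
  (hlen_gen : ∀ i : Fin (n - 1), len (gen i) = 1)

include hlen_mul

lemma len_one : len 1 = 0 := by
  have := hlen_mul 1 1
  simp at this
  omega

include hlen_gen

lemma len_gen'_of_lt {i : ℕ} (h : i < n - 1) : len (gen' i) = 1 := by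
  rw [gen'_eq_gen h]; exact hlen_gen _

lemma len_rowB {a k : ℕ} (h : a + k ≤ n - 1) : len (rowB a k) = k := by
  induction k generalizing a with
  | zero => exact len_one len hlen_mul
  | succ k ih =>
      show len (gen' a * rowB (a+1) k) = k + 1
      rw [hlen_mul, len_gen'_of_lt len hlen_mul hlen_gen (by omega), ih (by omega)]
      omega

lemma len_deltaB {a k : ℕ} (h : a + k ≤ n - 1) : len (deltaB a k) = k * (k + 1) / 2 := by
  induction k with
  | zero => exact len_one len hlen_mul
  | succ k ih =>
      show len (rowB a (k+1) * deltaB a k) = _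
      rw [hlen_mul, len_rowB len hlen_mul hlen_gen h, ih (by omega)]
      have hr : k * (k + 1) + 2 * (k + 1) = (k + 1) * (k + 1 + 1) := by ring
      omega

lemma len_word (l : List (Fin (n-1))) : len ((l.map gen).prod) = l.length := by
  induction l with
  | nil => exact len_one len hlen_mul
  | cons i l ih =>
      simp only [List.map_cons, List.prod_cons, List.length_cons]
      rw [hlen_mul, hlen_gen, ih]
      omega

/-- Upper bound construction: a common left multiple of the generators in `X`
of length `W X`. -/
lemma upper_word : ∀ d : ℕ, ∀ s : ℕ, ∀ X : Finset ℕ,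
    (∀ i ∈ X, s ≤ i ∧ i < s + d) → s + d ≤ n - 1 →
    ∃ w : BraidMonoid n, len w = W X ∧ ∀ i ∈ X, ∃ z, w = gen' i * z := by
  intro d
  induction d using Nat.strong_induction_on with
  | _ d ih =>
    intro s X hX hr
    rcases Finset.eq_empty_or_nonempty X with rfl | ⟨i0, hi0⟩
    · exact ⟨1, by rw [W_empty]; exact len_one len hlen_mul, by simp⟩
    have hd : 1 ≤ d := by have := hX i0 hi0; omega
    have hfind : ∃ c, s + c ∉ X := ⟨d, fun h => by have := hX _ h; omega⟩
    obtain ⟨m, hmd, hnot, hmem⟩ : ∃ m, m ≤ d ∧ s + m ∉ X ∧ ∀ c < m, s + c ∈ X := by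
      refine ⟨Nat.find hfind, Nat.find_le (fun h => by have := hX _ h; omega),
        Nat.find_spec hfind, fun c hc => ?_⟩
      by_contra h
      have hle : Nat.find hfind ≤ c := Nat.find_le h
      omega
    set X' := X.filter (fun i => s + m < i) with hX'
    have hXeq : X = Finset.Ico s (s + m) ∪ X' := by
      ext i
      simp only [Finset.mem_union, Finset.mem_Ico, hX', Finset.mem_filter]
      constructor
      · intro hi
        have hb := hX i hi
        rcases Nat.lt_trichotomy i (s + m) with h | h | h
        · exact Or.inl ⟨hb.1, h⟩
        · exact absurd (h ▸ hi) hnot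
        · exact Or.inr ⟨hi, h⟩
      · rintro (⟨h1, h2⟩ | ⟨h1, _⟩)
        · have := hmem (i - s) (by omega)
          have he : s + (i - s) = i := by omega
          rwa [he] at this
        · exact h1
    have hWX : W X = m * (m + 1) / 2 + W X' := by
      rw [hXeq, W_union (g := s + m) (fun a ha => (Finset.mem_Ico.mp ha).2)
        (fun b hb => (Finset.mem_filter.mp hb).2), W_Ico]
    rcases Nat.lt_or_ge m d with hmlt | hge
    · -- m < d : recursive call on X'
      obtain ⟨w', hw'len, hw'div⟩ := ih (d - m - 1) (by omega) (s + m + 1) X'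
        (fun i hi => by
          simp only [hX', Finset.mem_filter] at hi
          have := hX i hi.1
          constructor <;> omega)
        (by omega)
      refine ⟨deltaB s m * w', ?_, ?_⟩
      · rw [hlen_mul, len_deltaB len hlen_mul hlen_gen (by omega), hw'len, hWX]
      · intro i hi
        rw [hXeq] at hi
        rcases Finset.mem_union.mp hi with h | h
        · have hb := Finset.mem_Ico.mp h
          obtain ⟨z, hz⟩ := deltaB_div (n := n) (k := m) hb.1 (by omega) (by omega)
          exact ⟨z * w', by rw [hz, mul_assoc]⟩
        · obtain ⟨z, hz⟩ := hw'div i h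
          have hcomm : (gen' i : BraidMonoid n) * deltaB s m = deltaB s m * gen' i :=
            deltaB_comm (by
              have := (Finset.mem_filter.mp h).2
              omega)
          exact ⟨deltaB s m * z, by rw [hz, ← mul_assoc, ← hcomm, mul_assoc]⟩
    · -- m = d : X is the full interval
      have hmeq : m = d := le_antisymm hmd hge
      have hX'e : X' = ∅ := by
        ext i
        simp only [hX', Finset.mem_filter, Finset.notMem_empty, iff_false, not_and]
        intro hi
        have := hX i hi
        omega
      refine ⟨deltaB s m, ?_, ?_⟩
      · rw [len_deltaB len hlen_mul hlen_gen (by omega), hWX, hX'e, W_empty]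
        omega
      · intro i hi
        rw [hXeq, hX'e, Finset.union_empty] at hi
        have hb := Finset.mem_Ico.mp hi
        exact deltaB_div (n := n) hb.1 hb.2 (by omega)

end LenSection


def psiF (m : ℕ) (Y : Finset ℕ) : Finset ℕ := Finset.range m ∪ Y.image (· + (m+1))

lemma mem_psiF {m : ℕ} {Y : Finset ℕ} {c : ℕ} :
    c ∈ psiF m Y ↔ c < m ∨ ∃ y ∈ Y, y + (m+1) = c := by
  simp [psiF]

lemma psiF_card (m : ℕ) (Y : Finset ℕ) : (psiF m Y).card = m + Y.card := by
  unfold psiF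
  rw [Finset.card_union_of_disjoint, Finset.card_range,
    Finset.card_image_of_injective _ (add_left_injective (m+1))]
  rw [Finset.disjoint_left]
  intro c hc hc2
  simp only [Finset.mem_range] at hc
  simp only [Finset.mem_image] at hc2
  obtain ⟨y, _, rfl⟩ := hc2
  omega

lemma psiF_W (m : ℕ) (Y : Finset ℕ) : W (psiF m Y) = m * (m + 1) / 2 + W Y := by
  unfold psiF
  rw [W_union (g := m) (fun a ha => Finset.mem_range.mp ha)
    (fun b hb => by obtain ⟨y, _, rfl⟩ := Finset.mem_image.mp hb; omega),
    W_range, W_shift]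

lemma psiF_inj (m : ℕ) {Y Y' : Finset ℕ} (h : psiF m Y = psiF m Y') : Y = Y' := by
  ext y
  have h1 : (y + (m+1) ∈ psiF m Y) ↔ (y + (m+1) ∈ psiF m Y') := by rw [h]
  simp only [mem_psiF] at h1
  constructor
  · intro hy
    rcases h1.mp (Or.inr ⟨y, hy, rfl⟩) with h2 | ⟨y', hy', he⟩
    · omega
    · have : y' = y := by omega
      subst this; exact hy'
  · intro hy
    rcases h1.mpr (Or.inr ⟨y, hy, rfl⟩) with h2 | ⟨y', hy', he⟩
    · omega
    · have : y' = y := by omega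
      subst this; exact hy'

lemma psiF_cover (d : ℕ) :
    (Finset.range d).powerset
      = (Finset.range (d+1)).biUnion
          (fun m => ((Finset.range (d-m-1)).powerset).image (psiF m)) := by
  ext X
  simp only [Finset.mem_powerset, Finset.mem_biUnion, Finset.mem_range, Finset.mem_image]
  constructor
  · intro hX
    have hfind : ∃ c, c ∉ X := ⟨d, fun h => by have := Finset.mem_range.mp (hX h); omega⟩
    obtain ⟨m, hmd, hnot, hmem⟩ : ∃ m, m ≤ d ∧ m ∉ X ∧ ∀ c < m, c ∈ X := by
      refine ⟨Nat.find hfind, ?_, Nat.find_spec hfind, fun c hc => ?_⟩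
      · by_contra h
        have h2 : d ∈ X := by
          by_contra h3
          have h4 : Nat.find hfind ≤ d := Nat.find_le h3
          omega
        have := Finset.mem_range.mp (hX h2)
        omega
      · by_contra h
        have h4 : Nat.find hfind ≤ c := Nat.find_le h
        omega
    refine ⟨m, by omega, (X.filter (fun i => m < i)).image (· - (m+1)), ?_, ?_⟩
    · intro y hy
      simp only [Finset.mem_image, Finset.mem_filter] at hy
      obtain ⟨i, ⟨hiX, him⟩, rfl⟩ := hy
      have := Finset.mem_range.mp (hX hiX)
      simp only [Finset.mem_range]
      omega
    · ext c
      rw [mem_psiF]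
      constructor
      · rintro (h | ⟨y, hy, rfl⟩)
        · exact hmem c h
        · simp only [Finset.mem_image, Finset.mem_filter] at hy
          obtain ⟨i, ⟨hiX, him⟩, rfl⟩ := hy
          have : i - (m+1) + (m+1) = i := by omega
          rw [this]; exact hiX
      · intro hc
        rcases Nat.lt_trichotomy c m with h | h | h
        · exact Or.inl h
        · exact absurd (h ▸ hc) hnot
        · refine Or.inr ⟨c - (m+1), ?_, by omega⟩
          simp only [Finset.mem_image, Finset.mem_filter]
          exact ⟨c, ⟨hc, h⟩, rfl⟩
  · rintro ⟨m, hm, Y, hY, rfl⟩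
    intro c hc
    rw [mem_psiF] at hc
    simp only [Finset.mem_range]
    rcases hc with h | ⟨y, hy, rfl⟩
    · omega
    · have := Finset.mem_range.mp (hY hy)
      omega

lemma psiF_disjoint (d : ℕ) :
    ((Finset.range (d+1) : Finset ℕ) : Set ℕ).PairwiseDisjoint
      (fun m => ((Finset.range (d-m-1)).powerset).image (psiF m)) := by
  intro m _ m' _ hne
  rw [Function.onFun, Finset.disjoint_left]
  intro Z h1 h2
  simp only [Finset.mem_image] at h1 h2
  obtain ⟨Y, _, rfl⟩ := h1
  obtain ⟨Y', _, hZ⟩ := h2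
  rcases Nat.lt_or_ge m' m with h | h
  · have hmem : m' ∈ psiF m Y := mem_psiF.mpr (Or.inl h)
    rw [← hZ] at hmem
    rcases mem_psiF.mp hmem with h2 | ⟨y, _, he⟩ <;> omega
  · have hlt : m < m' := by omega
    have hmem : m ∈ psiF m' Y' := mem_psiF.mpr (Or.inl hlt)
    rw [hZ] at hmem
    rcases mem_psiF.mp hmem with h2 | ⟨y, _, he⟩ <;> omega

lemma mobiusH_zero : mobiusH 0 = 1 := by rw [mobiusH]

lemma mobiusH_one : mobiusH 1 = 1 := by rw [mobiusH]

lemma sum_W_eq_mobius (t : ℝ) : ∀ d : ℕ,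
    (∑ Y ∈ (Finset.range d).powerset, (-1:ℝ)^Y.card * t^(W Y))
      = Polynomial.aeval t (mobiusH (d+1)) := by
  intro d
  induction d using Nat.strong_induction_on with
  | _ d ih =>
    match d with
    | 0 =>
        simp [mobiusH_one, W_empty]
    | (e+1) =>
        rw [psiF_cover (e+1), Finset.sum_biUnion (psiF_disjoint (e+1))]
        have hterm : ∀ m ∈ Finset.range (e+2),
            (∑ Z ∈ ((Finset.range (e+1-m-1)).powerset).image (psiF m),
              (-1:ℝ)^Z.card * t^(W Z))
            = (-1:ℝ)^m * t^(m*(m+1)/2)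
                * Polynomial.aeval t (mobiusH (e+1-m-1+1)) := by
          intro m hm
          rw [Finset.sum_image (fun Y _ Y' _ h => psiF_inj m h)]
          rw [← ih (e+1-m-1) (by omega)]
          rw [Finset.mul_sum]
          apply Finset.sum_congr rfl
          intro Y _
          rw [psiF_card, psiF_W, pow_add, pow_add]
          ring
        rw [Finset.sum_congr rfl hterm]
        show _ = Polynomial.aeval t (mobiusH (e+2))
        rw [mobiusH]
        rw [map_sum]
        apply Finset.sum_congr rfl
        intro m hm
        simp only [map_mul, map_pow, Polynomial.aeval_X, map_neg, map_one]
        have h1 : mobiusH (e+1-m-1+1) = mobiusH (e+1-m) := by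
          rcases Nat.lt_or_ge m (e+1) with h | h
          · congr 1; omega
          · have hm2 : m = e + 1 := by have := Finset.mem_range.mp hm; omega
            subst hm2
            have e1 : e + 1 - (e+1) - 1 + 1 = 1 := by omega
            have e2 : e + 1 - (e+1) = 0 := by omega
            rw [e1, e2, mobiusH_zero, mobiusH_one]
        have h2 : m * (m+1) / 2 = (m+1) * m / 2 := by rw [mul_comm]
        rw [h1, h2]

/-- For every real `t`,
`Σ_{X ⊆ Σ} (-1)^{|X|} t^{ℓ(Δ_X)} = H_n(t)`. -/
theorem mobius_polynomial_inclusion_exclusion (n : ℕ) (hn : 1 ≤ n)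
    (len : BraidMonoid n → ℕ)
    (hlen_mul : ∀ x y : BraidMonoid n, len (x * y) = len x + len y)
    (hlen_gen : ∀ i : Fin (n - 1), len (gen i) = 1)
    (Δhat : Finset (Fin (n - 1)) → BraidMonoid n)
    (hlub_l : ∀ X : Finset (Fin (n - 1)),
      (∀ i ∈ X, ldvd (gen i) (Δhat X)) ∧
        ∀ z : BraidMonoid n, (∀ i ∈ X, ldvd (gen i) z) → ldvd (Δhat X) z)
    (hlub_r : ∀ X : Finset (Fin (n - 1)),
      (∀ i ∈ X, rdvd (gen i) (Δhat X)) ∧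
        ∀ z : BraidMonoid n, (∀ i ∈ X, rdvd (gen i) z) → rdvd (Δhat X) z)
    :
    ∀ t : ℝ,
      (∑ X : Finset (Fin (n - 1)), (-1 : ℝ) ^ X.card * t ^ len (Δhat X)) =
        Polynomial.aeval t (mobiusH n) := by
  intro t
  have key : ∀ X : Finset (Fin (n-1)), len (Δhat X) = W (X.image Fin.val) := by
    intro X
    set Y := X.image Fin.val with hY
    have hYlt : ∀ i ∈ Y, i < n - 1 := by
      intro i hi
      obtain ⟨j, _, rfl⟩ := Finset.mem_image.mp hi
      exact j.isLt
    obtain ⟨w, hwlen, hwdiv⟩ := upper_word len hlen_mul hlen_gen (n-1) 0 Y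
      (fun i hi => ⟨Nat.zero_le _, by have := hYlt i hi; omega⟩) (by omega)
    have hub : ldvd (Δhat X) w := by
      apply (hlub_l X).2
      intro j hj
      obtain ⟨z, hz⟩ := hwdiv j.val (Finset.mem_image.mpr ⟨j, hj, rfl⟩)
      refine ⟨z, ?_⟩
      rw [hz, gen'_eq_gen j.isLt]
    have hle1 : len (Δhat X) ≤ W Y := by
      obtain ⟨z, hz⟩ := hub
      have h1 := hlen_mul (Δhat X) z
      rw [← hz, hwlen] at h1
      omega
    obtain ⟨l, hl⟩ := exists_word (Δhat X)
    have hlenl : len (Δhat X) = l.length := by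
      rw [hl]; exact len_word len hlen_mul hlen_gen l
    have hinv0 : invCount n id = 0 := by
      rw [invCount, Finset.card_eq_zero, Finset.filter_eq_empty_iff]
      intro p _
      simp only [id]
      omega
    have hiub : invCount n ((hecke (Δhat X) : Function.End (ℕ → ℕ)) id) ≤ l.length := by
      have h2 := invCount_word (n := n) (N := n) l (by omega) id
      rw [← hl] at h2
      omega
    have hlb : W Y ≤ invCount n ((hecke (Δhat X) : Function.End (ℕ → ℕ)) id) := by
      apply W_le_invCount (fun i hi => by have := hYlt i hi; omega)
      intro i hi
      obtain ⟨j, hj, rfl⟩ := Finset.mem_image.mp hi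
      exact descent_of_ldvd ((hlub_l X).1 j hj)
    omega
  have hsum : (∑ X : Finset (Fin (n-1)), (-1:ℝ)^X.card * t^(len (Δhat X)))
      = ∑ Y ∈ (Finset.range (n-1)).powerset, (-1:ℝ)^Y.card * t^(W Y) := by
    apply Finset.sum_bij (fun X _ => X.image Fin.val)
    · intro X _
      rw [Finset.mem_powerset]
      intro i hi
      obtain ⟨j, _, rfl⟩ := Finset.mem_image.mp hi
      exact Finset.mem_range.mpr j.isLt
    · intro a _ b _ h
      exact Finset.image_injective Fin.val_injective h
    · intro Y hY
      refine ⟨Y.attachFin (fun m hm => Finset.mem_range.mp (Finset.mem_powerset.mp hY hm)),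
        Finset.mem_univ _, ?_⟩
      ext c
      simp only [Finset.mem_image, Finset.mem_attachFin]
      constructor
      · rintro ⟨j, hj, rfl⟩
        exact hj
      · intro hc
        have hclt : c < n - 1 := Finset.mem_range.mp (Finset.mem_powerset.mp hY hc)
        exact ⟨⟨c, hclt⟩, hc, rfl⟩
    · intro X _
      rw [key X, Finset.card_image_of_injective _ Fin.val_injective]
  rw [hsum, sum_W_eq_mobius t (n-1), show n - 1 + 1 = n from by omega]


end BraidMeasure
end
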